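/- If g2 > g1 ≥ 1 and g2 > 1, then every continuous map f : Σ_{g1} → Σ_{g2} between closed orientable surfaces of genus g1 and g2 has degree 0. -/

import Mathlib

open scoped BigOperators

noncomputable section

/-- Singular `n`-simplices of `X`: continuous maps from the standard `n`-simplex. -/
abbrev SingularSimplex (n : ℕ) (X : Type) [TopologicalSpace X] :=
  C(↥(stdSimplex ℝ (Fin (n + 1))), X)

/-- Real singular `n`-chains: finite formal `ℝ`-linear combinations of singular
`n`-simplices. -/
abbrev SingularChain (n : ℕ) (X : Type) [TopologicalSpace X] :=
  SingularSimplex n X →₀ ℝ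

/-- The `ℓ¹`-norm `|c|₁ = ∑ |a_j|` of a singular chain `c = ∑ a_j σ_j`. -/
def chainL1 {n : ℕ} {X : Type} [TopologicalSpace X] (c : SingularChain n X) : ℝ :=
  ∑ σ ∈ c.support, |c σ|

/-- The `i`-th face inclusion of the standard `n`-simplex into the standard
`(n+1)`-simplex (insert the barycentric coordinate `0` in position `i`). -/
def faceMap (n : ℕ) (i : Fin (n + 2)) :
    C(↥(stdSimplex ℝ (Fin (n + 1))), ↥(stdSimplex ℝ (Fin (n + 2)))) :=
  ⟨fun x => ⟨(i.insertNth (0 : ℝ) x.1 : Fin (n + 2) → ℝ), by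
      obtain ⟨x, hx⟩ := x
      refine ⟨fun j => ?_, ?_⟩
      · exact i.succAboveCases (by simp) (fun j => by simpa using hx.1 j) j
      · rw [Fin.sum_univ_succAbove _ i]
        simpa using hx.2⟩,
    by
      have h1 : Continuous fun y : Fin (n + 1) → ℝ =>
          (i.insertNth (0 : ℝ) y : Fin (n + 2) → ℝ) :=
        Continuous.finInsertNth i continuous_const continuous_id
      have h : Continuous fun x : ↥(stdSimplex ℝ (Fin (n + 1))) =>
          (i.insertNth (0 : ℝ) x.1 : Fin (n + 2) → ℝ) :=
        h1.comp continuous_subtype_val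
      exact h.subtype_mk _⟩

/-- The singular boundary operator `∂ : C_{n+1}(X;ℝ) → C_n(X;ℝ)`,
`∂σ = ∑ᵢ (-1)ⁱ σ ∘ δᵢ`. -/
def boundary (n : ℕ) (X : Type) [TopologicalSpace X]
    (c : SingularChain (n + 1) X) : SingularChain n X :=
  c.sum fun σ r => ∑ i : Fin (n + 2),
    ((-1 : ℝ) ^ (i : ℕ) * r) • Finsupp.single (σ.comp (faceMap n i)) (1 : ℝ)

/-- The pushforward (chain map) `f_#` of singular chains along a continuous map. -/
def pushforward {n : ℕ} {X Y : Type} [TopologicalSpace X] [TopologicalSpace Y]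
    (f : C(X, Y)) (c : SingularChain n X) : SingularChain n Y :=
  Finsupp.mapDomain (fun σ => f.comp σ) c

/-- `F` is the (nonempty) set of real singular `n`-cycles representing a fixed
homology class of `X` — e.g. the fundamental class `[X]` of an oriented closed
connected `n`-manifold `X`.  It consists of cycles, and two of its members differ
exactly by a boundary. -/
def IsFundamentalClass (n : ℕ) (X : Type) [TopologicalSpace X]
    (F : Set (SingularChain n X)) : Prop :=
  F.Nonempty ∧
  (∀ c ∈ F, ∀ m (h : n = m + 1), boundary m X (h ▸ c) = 0) ∧
  (∀ c ∈ F, ∀ c', c' ∈ F ↔ ∃ b, c' = c + boundary n X b)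

/-- The simplicial volume (Gromov norm) associated with the class `F`:
`inf { |c|₁ : c ∈ F }`. -/
def simplicialVolume {n : ℕ} {X : Type} [TopologicalSpace X]
    (F : Set (SingularChain n X)) : ℝ :=
  sInf (chainL1 '' F)

/-- `f` has degree `d` with respect to the classes `FX`, `FY`:
`f_*[X] = d·[Y]`, i.e. the pushforward of any representative of `[X]` is
homologous to `d` times a representative of `[Y]`. -/
def HasDegree {n : ℕ} {X Y : Type} [TopologicalSpace X] [TopologicalSpace Y]
    (f : C(X, Y)) (FX : Set (SingularChain n X)) (FY : Set (SingularChain n Y))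
    (d : ℤ) : Prop :=
  ∀ c ∈ FX, ∃ c' ∈ FY, ∃ b, pushforward f c = (d : ℝ) • c' + boundary n Y b


lemma chainL1_nonneg {n : ℕ} {X : Type} [TopologicalSpace X] (c : SingularChain n X) :
    0 ≤ chainL1 c :=
  Finset.sum_nonneg fun _ _ => abs_nonneg _

lemma chainL1_eq_sum {n : ℕ} {X : Type} [TopologicalSpace X] (c : SingularChain n X)
    (s : Finset (SingularSimplex n X)) (hs : c.support ⊆ s) :
    chainL1 c = ∑ σ ∈ s, |c σ| :=
  Finset.sum_subset hs fun σ _ hσ => by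
    simp [Finsupp.notMem_support_iff.mp hσ]

lemma chainL1_add_le {n : ℕ} {X : Type} [TopologicalSpace X] (x y : SingularChain n X) :
    chainL1 (x + y) ≤ chainL1 x + chainL1 y := by
  classical
  rw [chainL1_eq_sum (x + y) (x.support ∪ y.support) Finsupp.support_add,
      chainL1_eq_sum x (x.support ∪ y.support) Finset.subset_union_left,
      chainL1_eq_sum y (x.support ∪ y.support) Finset.subset_union_right,
      ← Finset.sum_add_distrib]
  exact Finset.sum_le_sum fun σ _ => by simpa using abs_add_le (x σ) (y σ)

lemma chainL1_zero {n : ℕ} {X : Type} [TopologicalSpace X] :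
    chainL1 (0 : SingularChain n X) = 0 := by simp [chainL1]

lemma chainL1_single {n : ℕ} {X : Type} [TopologicalSpace X]
    (σ : SingularSimplex n X) (r : ℝ) :
    chainL1 (Finsupp.single σ r) = |r| := by
  rw [chainL1_eq_sum _ {σ} Finsupp.support_single_subset]
  simp

lemma chainL1_sum_le {n : ℕ} {X : Type} [TopologicalSpace X] {ι : Type*} (s : Finset ι)
    (f : ι → SingularChain n X) :
    chainL1 (∑ a ∈ s, f a) ≤ ∑ a ∈ s, chainL1 (f a) := by
  classical
  induction s using Finset.cons_induction with
  | empty => simp [chainL1_zero]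
  | cons a s ha ih =>
    simp only [Finset.sum_cons]
    exact (chainL1_add_le _ _).trans (by linarith)

lemma chainL1_mapDomain_le {n : ℕ} {X Y : Type} [TopologicalSpace X] [TopologicalSpace Y]
    (g : SingularSimplex n X → SingularSimplex n Y) (c : SingularChain n X) :
    chainL1 (Finsupp.mapDomain g c) ≤ chainL1 c := by
  rw [Finsupp.mapDomain, Finsupp.sum]
  refine (chainL1_sum_le _ _).trans (le_of_eq ?_)
  unfold chainL1
  exact Finset.sum_congr rfl fun σ _ => chainL1_single _ _

lemma chainL1_smul {n : ℕ} {X : Type} [TopologicalSpace X] (r : ℝ) (c : SingularChain n X) :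
    chainL1 (r • c) = |r| * chainL1 c := by
  rcases eq_or_ne r 0 with rfl | hr
  · simp [chainL1_zero]
  · unfold chainL1
    rw [Finsupp.support_smul_eq hr, Finset.mul_sum]
    exact Finset.sum_congr rfl fun σ _ => by
      rw [Finsupp.smul_apply, smul_eq_mul, abs_mul]

lemma boundary_smul (n : ℕ) (X : Type) [TopologicalSpace X] (r : ℝ)
    (c : SingularChain (n + 1) X) :
    boundary n X (r • c) = r • boundary n X c := by
  unfold boundary
  rw [Finsupp.sum_smul_index' (fun σ => by simp), Finsupp.smul_sum]
  refine Finsupp.sum_congr fun σ _ => ?_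
  rw [Finset.smul_sum]
  refine Finset.sum_congr rfl fun i _ => ?_
  rw [smul_smul, smul_eq_mul]
  ring_nf

/-- If `g2 > g1 ≥ 1` and `g2 > 1`, every continuous map
`f : Σ_{g1} → Σ_{g2}` between closed orientable surfaces of genus `g1`, `g2`
(encoded via their fundamental classes and `‖Σ_g‖ = 4g - 4`) has degree `0`. -/
theorem stmt7 (g1 g2 : ℕ) (hg1 : 1 ≤ g1) (hg12 : g1 < g2) (hg2 : 1 < g2)
    (M N : Type) [TopologicalSpace M] [TopologicalSpace N]
    (FM : Set (SingularChain 2 M)) (FN : Set (SingularChain 2 N))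
    (hFM : IsFundamentalClass 2 M FM) (hFN : IsFundamentalClass 2 N FN)
    (hvolM : simplicialVolume FM = 4 * (g1 : ℝ) - 4)
    (hvolN : simplicialVolume FN = 4 * (g2 : ℝ) - 4)
    (f : C(M, N)) (d : ℤ) (hdeg : HasDegree f FM FN d) :
    d = 0 := by
  by_contra hd
  have hdR : ((d : ℝ)) ≠ 0 := by exact_mod_cast hd
  have hdabs : (1 : ℝ) ≤ |(d : ℝ)| := by
    have : (1 : ℤ) ≤ |d| := Int.one_le_abs (by exact_mod_cast hd)
    calc (1:ℝ) ≤ (|d| : ℤ) := by exact_mod_cast this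
    _ = |(d : ℝ)| := by push_cast [Int.cast_abs]; ring
  -- lower bound on the volume of M
  have key : ∀ c ∈ FM, |(d : ℝ)| * simplicialVolume FN ≤ chainL1 c := by
    intro c hc
    obtain ⟨c', hc', b, heq⟩ := hdeg c hc
    set z : SingularChain 2 N := ((d : ℝ))⁻¹ • pushforward f c with hz
    have hzF : z ∈ FN := by
      refine (hFN.2.2 c' hc' z).mpr ⟨((d : ℝ))⁻¹ • b, ?_⟩
      rw [hz, heq, smul_add, inv_smul_smul₀ hdR, boundary_smul]
    have h1 : simplicialVolume FN ≤ chainL1 z := by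
      refine csInf_le ⟨0, ?_⟩ ⟨z, hzF, rfl⟩
      rintro y ⟨w, -, rfl⟩
      exact chainL1_nonneg w
    have h2 : chainL1 z = |(d : ℝ)|⁻¹ * chainL1 (pushforward f c) := by
      rw [hz, chainL1_smul, abs_inv]
    have h3 : chainL1 (pushforward f c) ≤ chainL1 c :=
      chainL1_mapDomain_le _ _
    have hdpos : 0 < |(d : ℝ)| := by positivity
    rw [h2] at h1
    calc |(d : ℝ)| * simplicialVolume FN
        ≤ |(d : ℝ)| * (|(d : ℝ)|⁻¹ * chainL1 (pushforward f c)) :=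
          mul_le_mul_of_nonneg_left h1 hdpos.le
      _ = chainL1 (pushforward f c) := by field_simp
      _ ≤ chainL1 c := h3
  have hM : |(d : ℝ)| * simplicialVolume FN ≤ simplicialVolume FM := by
    refine le_csInf (hFM.1.image _) ?_
    rintro y ⟨c, hc, rfl⟩
    exact key c hc
  have hNpos : 0 < simplicialVolume FN := by
    rw [hvolN]
    have : (2 : ℝ) ≤ (g2 : ℝ) := by exact_mod_cast hg2
    linarith
  have : simplicialVolume FN ≤ simplicialVolume FM := by
    nlinarith
  rw [hvolM, hvolN] at this
  have : (g2 : ℝ) ≤ (g1 : ℝ) := by linarith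
  have : g2 ≤ g1 := by exact_mod_cast this
  omega


end
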